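/- Let a₁, a₂, x₁, x₂ be positive real numbers and let s ∈ ℂ with Re(s) > 1. Then the family indexed by (m,n) ∈ ℕ × ℕ whose (m,n)-term is (x₁ + m + (x₂ + n)·a₁)^{−s} · (x₁ + m + (x₂ + n)·a₂)^{−s} is absolutely summable; here for a positive real w, w^{−s} denotes exp(−s·log w). -/

import Mathlib

set_option maxHeartbeats 1000000


open Real Complex

/-- Absolute convergence of the defining double series of the Shintani
L-function `ζ(s, (a₁,a₂), (x₁,x₂))` for `Re(s) > 1`. -/
theorem shintani_L_abs_summable
    (a₁ a₂ x₁ x₂ : ℝ) (ha₁ : 0 < a₁) (ha₂ : 0 < a₂) (hx₁ : 0 < x₁) (hx₂ : 0 < x₂)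
    (s : ℂ) (hs : 1 < s.re) :
    Summable (fun p : ℕ × ℕ =>
      ‖Complex.exp (-s * (Real.log (x₁ + p.1 + (x₂ + p.2) * a₁) : ℂ)) *
        Complex.exp (-s * (Real.log (x₁ + p.1 + (x₂ + p.2) * a₂) : ℂ))‖) := by
  set σ := s.re with hσ
  -- summable majorant
  have hg : Summable (fun m : ℕ => 1 / |(m : ℝ) + x₁| ^ σ) :=
    (Real.summable_one_div_nat_add_rpow x₁ σ).2 hs
  have hh0 : Summable (fun n : ℕ => 1 / |(n : ℝ) + x₂| ^ σ) :=
    (Real.summable_one_div_nat_add_rpow x₂ σ).2 hs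
  have hh : Summable (fun n : ℕ => a₂ ^ (-σ) * (1 / |(n : ℝ) + x₂| ^ σ)) := hh0.mul_left _
  have hmaj : Summable (fun p : ℕ × ℕ =>
      (1 / |(p.1 : ℝ) + x₁| ^ σ) * (a₂ ^ (-σ) * (1 / |(p.2 : ℝ) + x₂| ^ σ))) :=
    hg.mul_of_nonneg hh (fun m => by positivity) (fun n => by positivity)
  refine Summable.of_nonneg_of_le (fun _ => norm_nonneg _) (fun p => ?_) hmaj
  obtain ⟨m, n⟩ := p
  have hA : (0:ℝ) < x₁ + m + (x₂ + n) * a₁ := by positivity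
  have hB : (0:ℝ) < x₁ + m + (x₂ + n) * a₂ := by positivity
  have key : ∀ w : ℝ, 0 < w →
      ‖Complex.exp (-s * (Real.log w : ℂ))‖ = w ^ (-σ) := by
    intro w hw
    rw [Complex.norm_exp, Real.rpow_def_of_pos hw]
    congr 1
    simp [hσ]
    ring
  rw [norm_mul, key _ hA, key _ hB]
  have hσ0 : σ ≤ 0 ∨ True := Or.inr trivial
  have h1 : (x₁ + m + (x₂ + n) * a₁) ^ (-σ) ≤ 1 / |(m : ℝ) + x₁| ^ σ := by
    have hb : (0:ℝ) < (m : ℝ) + x₁ := by positivity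
    have hle : (m : ℝ) + x₁ ≤ x₁ + m + (x₂ + n) * a₁ := by
      have : (0:ℝ) ≤ (x₂ + n) * a₁ := by positivity
      linarith
    have := Real.rpow_le_rpow_of_nonpos hb hle (by linarith : -σ ≤ 0)
    rwa [one_div, _root_.abs_of_nonneg hb.le, ← Real.rpow_neg hb.le]
  have h2 : (x₁ + m + (x₂ + n) * a₂) ^ (-σ) ≤ a₂ ^ (-σ) * (1 / |(n : ℝ) + x₂| ^ σ) := by
    have hb : (0:ℝ) < ((n : ℝ) + x₂) * a₂ := by positivity
    have hle : ((n : ℝ) + x₂) * a₂ ≤ x₁ + m + (x₂ + n) * a₂ := by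
      have h0 : (0:ℝ) ≤ x₁ + m := by positivity
      have he : ((n:ℝ) + x₂) * a₂ = (x₂ + n) * a₂ := by ring
      linarith
    have hmono := Real.rpow_le_rpow_of_nonpos hb hle (by linarith : -σ ≤ 0)
    have hb2 : (0:ℝ) < (n : ℝ) + x₂ := by positivity
    calc (x₁ + m + (x₂ + n) * a₂) ^ (-σ) ≤ (((n : ℝ) + x₂) * a₂) ^ (-σ) := hmono
      _ = a₂ ^ (-σ) * (1 / |(n : ℝ) + x₂| ^ σ) := by
          rw [Real.mul_rpow hb2.le ha₂.le, Real.rpow_neg hb2.le, _root_.abs_of_nonneg hb2.le, one_div]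
          ring
  have hfa : (0:ℝ) ≤ (x₁ + m + (x₂ + n) * a₁) ^ (-σ) := Real.rpow_nonneg hA.le _
  have hfb : (0:ℝ) ≤ a₂ ^ (-σ) * (1 / |(n : ℝ) + x₂| ^ σ) := by positivity
  exact mul_le_mul h1 h2 (Real.rpow_nonneg hB.le _) (by positivity)
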